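/- Let (R, +, ·, 0, 1) be a unitary ring. The following are equivalent: (i) the element 1+1 admits a (two-sided) multiplicative inverse in R; (ii) there is a unique IMM algebra structure (R, ¯(), ⊕, ·, 1) on R (with the same multiplication · and unit 1) such that ā = 1−a and a⊕b = (1̄⊕1)·(a+b) for all a, b ∈ R; (iii) there is a unique IMM algebra structure (R, ¯(), ⊕, ·, 1) on R (with the same multiplication · and unit 1) such that ā = 1−a and a+b = (1+1)·(a⊕b) for all a, b ∈ R. -/
import Mathlib


/-- An involutive medial monoid (IMM) algebra. -/
structure IMM (B : Type*) where
  inv : B → B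
  oplus : B → B → B
  mul : B → B → B
  one : B
  B1 : ∀ a, oplus a a = a
  B2 : ∀ a b, oplus a b = oplus b a
  B3 : ∀ a b c d, oplus (oplus a b) (oplus c d) = oplus (oplus a c) (oplus b d)
  B4 : ∀ a b c, mul a (mul b c) = mul (mul a b) c
  B5 : ∀ a, mul a one = a
  B5' : ∀ a, mul one a = a
  B6 : ∀ a b c, mul a (oplus b c) = oplus (mul a b) (mul a c)
  B6' : ∀ a b c, mul (oplus a b) c = oplus (mul a c) (mul b c)
  B7 : ∀ a, inv (inv a) = a
  B8 : ∀ a b, inv (oplus a b) = oplus (inv a) (inv b)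
  B9 : ∀ a, mul a (inv one) = inv one
  B9' : ∀ a, mul (inv one) a = inv one
  B10 : ∀ a, oplus (inv a) a = oplus (inv one) one

lemma IMM.ext' {B : Type*} {I J : IMM B} (h1 : I.inv = J.inv)
    (h2 : I.oplus = J.oplus) (h3 : I.mul = J.mul) (h4 : I.one = J.one) : I = J := by
  cases I; cases J; simp_all

lemma central {R : Type*} [Ring R] (h : R) (h1 : (1+1)*h = 1) (h2 : h*(1+1) = 1)
    (a : R) : h * a = a * h := by
  have comm2 : a * (1+1) = (1+1) * a := by noncomm_ring
  calc h * a = h * a * ((1+1) * h) := by rw [h1, mul_one]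
    _ = h * (a * (1+1)) * h := by noncomm_ring
    _ = h * ((1+1) * a) * h := by rw [comm2]
    _ = (h * (1+1)) * (a * h) := by noncomm_ring
    _ = a * h := by rw [h2, one_mul]

def canonIMM {R : Type*} [Ring R] (h : R) (h1 : (1+1)*h = 1) (h2 : h*(1+1) = 1) :
    IMM R where
  inv a := 1 - a
  oplus a b := h * (a + b)
  mul a b := a * b
  one := 1
  B1 a := by
    show h * (a + a) = a
    have : h * (a + a) = (h * (1+1)) * a := by noncomm_ring
    rw [this, h2, one_mul]
  B2 a b := by show h * (a + b) = h * (b + a); rw [add_comm]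
  B3 a b c d := by
    show h * (h * (a + b) + h * (c + d)) = h * (h * (a + c) + h * (b + d))
    have : ∀ x y : R, h * (h * x + h * y) = h * h * (x + y) := by
      intro x y; noncomm_ring
    rw [this, this, add_add_add_comm]
  B4 a b c := by show a * (b * c) = (a * b) * c; rw [mul_assoc]
  B5 a := mul_one a
  B5' a := one_mul a
  B6 a b c := by
    show a * (h * (b + c)) = h * (a * b + a * c)
    rw [← mul_assoc, ← central h h1 h2 a, mul_assoc, mul_add]
  B6' a b c := by
    show (h * (a + b)) * c = h * (a * c + b * c)
    rw [mul_assoc, add_mul]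
  B7 a := by show 1 - (1 - a) = a; abel
  B8 a b := by
    show 1 - h * (a + b) = h * ((1 - a) + (1 - b))
    have : h * ((1 - a) + (1 - b)) = h * (1+1) - h * (a + b) := by noncomm_ring
    rw [this, h2]
  B9 a := by show a * (1 - 1) = 1 - 1; simp
  B9' a := by show (1 - 1) * a = 1 - 1; simp
  B10 a := by
    show h * ((1 - a) + a) = h * ((1 - 1) + 1)
    norm_num

lemma uniq_oplus {R : Type*} [Ring R] (I : IMM R)
    (hm : I.mul = (fun a b => a * b)) (ho : I.one = 1)
    (hi : ∀ a, I.inv a = 1 - a)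
    (hop : ∀ a b : R, I.oplus a b = I.oplus (I.inv I.one) I.one * (a + b))
    (e1 : I.oplus (I.inv I.one) I.one * (1 + 1) = 1)
    (e3 : (1 + 1) * I.oplus (I.inv I.one) I.one = 1)
    (h : R) (h1 : (1+1)*h = 1) (h2 : h*(1+1) = 1) :
    I = canonIMM h h1 h2 := by
  set c := I.oplus (I.inv I.one) I.one with hc
  have ech : c = h := by
    calc c = c * ((1+1) * h) := by rw [h1, mul_one]
      _ = (c * (1+1)) * h := by rw [mul_assoc]
      _ = h := by rw [e1, one_mul]
  apply IMM.ext'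
  · funext a; rw [hi a]; rfl
  · funext a b
    show I.oplus a b = h * (a + b)
    rw [hop a b, ech]
  · exact hm
  · exact ho

/-- Theorem 5.4: for a unitary ring R, the following are equivalent:
(i) 1+1 has a two-sided multiplicative inverse;
(ii) there is a unique IMM algebra structure (R,¯(),⊕,·,1) with
     ā = 1 - a and a⊕b = (1̄⊕1)·(a+b);
(iii) there is a unique IMM algebra structure (R,¯(),⊕,·,1) with
     ā = 1 - a and a+b = (1+1)·(a⊕b). -/
theorem ring_IMM_equiv {R : Type*} [Ring R] :
    ((∃ h : R, (1 + 1) * h = 1 ∧ h * (1 + 1) = 1) ↔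
      (∃! I : IMM R,
        I.mul = (fun a b => a * b) ∧ I.one = 1 ∧
        (∀ a, I.inv a = 1 - a) ∧
        ∀ a b : R, I.oplus a b =
          I.oplus (I.inv I.one) I.one * (a + b))) ∧
    ((∃ h : R, (1 + 1) * h = 1 ∧ h * (1 + 1) = 1) ↔
      (∃! I : IMM R,
        I.mul = (fun a b => a * b) ∧ I.one = 1 ∧
        (∀ a, I.inv a = 1 - a) ∧
        ∀ a b : R, a + b = (1 + 1) * I.oplus a b)) := by
  -- facts for an arbitrary IMM with property (ii)
  have key2 : ∀ I : IMM R, I.mul = (fun a b => a * b) → I.one = 1 →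
      (∀ a, I.inv a = 1 - a) →
      (∀ a b : R, I.oplus a b = I.oplus (I.inv I.one) I.one * (a + b)) →
      (I.oplus (I.inv I.one) I.one * (1 + 1) = 1 ∧
       (1 + 1) * I.oplus (I.inv I.one) I.one = 1) := by
    intro I hm ho hi hs
    set c := I.oplus (I.inv I.one) I.one with hc
    have e1 : c * (1 + 1) = 1 := by
      have := hs 1 1
      rw [I.B1 1] at this
      exact this.symm
    have e2 : ∀ a : R, a * c = c * a := by
      intro a
      have b6 := I.B6 a (I.inv I.one) I.one
      rw [hm] at b6
      simp only at b6
      calc a * c = I.oplus (a * I.inv I.one) (a * I.one) := b6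
        _ = c * (a * I.inv I.one + a * I.one) := hs _ _
        _ = c * a := by rw [hi, ho]; norm_num
    have e3 : (1 + 1) * c = 1 := by rw [e2, e1]
    exact ⟨e1, e3⟩
  -- facts for an arbitrary IMM with property (iii)
  have key3 : ∀ I : IMM R, I.mul = (fun a b => a * b) → I.one = 1 →
      (∀ a, I.inv a = 1 - a) →
      (∀ a b : R, a + b = (1 + 1) * I.oplus a b) →
      ((∀ a b : R, I.oplus a b = I.oplus (I.inv I.one) I.one * (a + b)) ∧
       I.oplus (I.inv I.one) I.one * (1 + 1) = 1 ∧
       (1 + 1) * I.oplus (I.inv I.one) I.one = 1) := by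
    intro I hm ho hi hs
    set c := I.oplus (I.inv I.one) I.one with hc
    have e1 : (1 + 1) * c = 1 := by
      have b10 := I.B10 0
      rw [hc]
      rw [hi 0] at b10
      have := hs (1 - 0) 0
      rw [b10] at this
      simpa using this.symm
    have hop : ∀ a b : R, I.oplus a b = c * (a + b) := by
      intro a b
      have b6a := I.B6 c a b
      rw [hm] at b6a
      simp only at b6a
      calc I.oplus a b = ((1+1)*c) * I.oplus a b := by rw [e1, one_mul]
        _ = (1+1) * (c * I.oplus a b) := by rw [mul_assoc]
        _ = (1+1) * I.oplus (c*a) (c*b) := by rw [b6a]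
        _ = c*a + c*b := (hs (c*a) (c*b)).symm
        _ = c * (a + b) := by rw [mul_add]
    have e2 : c * (1 + 1) = 1 := by
      have b8 := I.B8 0 1
      rw [hi, hi, hi, hop] at b8
      have hcc : (1:R) - c = c := by
        calc (1:R) - c = 1 - c * (0+1) := by rw [zero_add, mul_one]
          _ = I.oplus (1 - 0) (1 - 1) := b8
          _ = c * (1 - 0 + (1 - 1)) := hop _ _
          _ = c := by norm_num
      calc c * (1 + 1) = c + c := by rw [mul_add, mul_one]
        _ = (1 - c) + c := by rw [hcc]
        _ = 1 := by abel
    exact ⟨hop, e2, e1⟩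
  constructor
  · constructor
    · rintro ⟨h, h1, h2⟩
      refine ⟨canonIMM h h1 h2, ⟨rfl, rfl, fun a => rfl, ?_⟩, ?_⟩
      · intro a b
        show h * (a + b) = h * ((1 - 1) + 1) * (a + b)
        norm_num
      · rintro I ⟨hm, ho, hi, hs⟩
        obtain ⟨e1, e3⟩ := key2 I hm ho hi hs
        exact uniq_oplus I hm ho hi hs e1 e3 h h1 h2
    · rintro ⟨I, ⟨hm, ho, hi, hs⟩, -⟩
      obtain ⟨e1, e3⟩ := key2 I hm ho hi hs
      exact ⟨I.oplus (I.inv I.one) I.one, e3, e1⟩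
  · constructor
    · rintro ⟨h, h1, h2⟩
      refine ⟨canonIMM h h1 h2, ⟨rfl, rfl, fun a => rfl, ?_⟩, ?_⟩
      · intro a b
        show a + b = (1 + 1) * (h * (a + b))
        rw [← mul_assoc, h1, one_mul]
      · rintro I ⟨hm, ho, hi, hs⟩
        obtain ⟨hop, e1, e3⟩ := key3 I hm ho hi hs
        exact uniq_oplus I hm ho hi hop e1 e3 h h1 h2
    · rintro ⟨I, ⟨hm, ho, hi, hs⟩, -⟩
      obtain ⟨hop, e1, e3⟩ := key3 I hm ho hi hs
      exact ⟨I.oplus (I.inv I.one) I.one, e3, e1⟩
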